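/- Let R be an algebra over a commutative ring S, E an injective S-module that cogenerates the category of S-modules, and M a right R-module. Then M is (n,m)-flat if and only if Hom_S(M,E) is an (n,m)-injective left R-module. -/

import Mathlib

open MulOpposite

section

variable (S R M E : Type*) [CommRing S] [Ring R] [Algebra S R]
  [AddCommGroup M] [Module Rᵐᵒᵖ M] [Module S M] [SMulCommClass Rᵐᵒᵖ S M]
  [AddCommGroup E] [Module S E]

/-- Right multiplication by `r` on a right `R`-module `M`, as an `S`-linear map. -/
def rightMulS (r : R) : M →ₗ[S] M where
  toFun x := op r • x
  map_add' x y := smul_add (op r) x y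
  map_smul' s x := by
    show op r • s • x = s • op r • x
    exact smul_comm (op r) s x

/-- The left `R`-module structure on `Hom_S(M, E)` for a right `R`-module `M`:
`(r • f) x = f (x · r)`. -/
instance homModule : Module R (M →ₗ[S] E) where
  smul r f := f ∘ₗ rightMulS S R M r
  one_smul f := by
    ext x
    show f (op (1 : R) • x) = f x
    rw [op_one, one_smul]
  mul_smul r r' f := by
    ext x
    show f (op (r * r') • x) = f (op r' • op r • x)
    rw [op_mul, mul_smul]
  smul_zero r := by ext x; rfl
  smul_add r f g := by ext x; rfl
  add_smul r r' f := by
    ext x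
    show f (op (r + r') • x) = f (op r • x) + f (op r' • x)
    rw [op_add, add_smul, map_add]
  zero_smul f := by
    ext x
    show f (op (0 : R) • x) = 0
    rw [op_zero, zero_smul, map_zero]

/-- A right `R`-module `M` is `(n,m)`-flat: for every `m`-generated submodule `K`
of the free left `R`-module `Rⁿ`, the natural map `M ⊗_R K → M ⊗_R Rⁿ` is
injective.  This is expressed by the element-wise (equational) criterion. -/
def NMFlatRight (n m : ℕ) : Prop :=
  ∀ (k : Fin m → Fin n → R) (y : Fin m → M),
    (∀ t, ∑ j, op (k j t) • y j = 0) →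
    ∃ (L : ℕ) (z : Fin L → M) (c : Fin L → Fin m → R),
      (∀ l t, ∑ j, c l j * k j t = 0) ∧ ∀ j, y j = ∑ l, op (c l j) • z l

end

/-- A left `R`-module `N` is `(n,m)`-injective: for every `m`-generated submodule
`K` of the free left `R`-module `Rⁿ`, every homomorphism `K → N` extends to `Rⁿ`. -/
def NMInjectiveLeft (R : Type*) [Ring R] (N : Type*) [AddCommGroup N] [Module R N]
    (n m : ℕ) : Prop :=
  ∀ K : Submodule R (Fin n → R),
    (∃ s : Finset (Fin n → R), s.card ≤ m ∧ Submodule.span R (s : Set (Fin n → R)) = K) →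
    ∀ f : K →ₗ[R] N, ∃ g : (Fin n → R) →ₗ[R] N, ∀ x : K, g x.1 = f x

section Aux

universe u' w' x'

variable {S : Type u'} [CommRing S] {E : Type x'} [AddCommGroup E] [Module S E]

lemma small_quot_of_cog
    (hcog : ∀ (N : Type w') [AddCommGroup N] [Module S N] (z : N), z ≠ 0 →
      ∃ f : N →ₗ[S] E, f z ≠ 0)
    (I : Ideal S) [Small.{w'} (S ⧸ I)] : Small.{x'} (S ⧸ I) := by
  classical
  set V : Type x' := {e : E // ∀ i ∈ I, i • e = 0} → E with hV
  let Φ : S →ₗ[S] V :=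
    { toFun := fun s => fun e => s • e.1
      map_add' := by intro a b; funext e; exact add_smul a b e.1
      map_smul' := by intro a b; funext e; exact mul_smul a b e.1 }
  have hIker : I ≤ LinearMap.ker Φ := by
    intro i hi
    simp only [LinearMap.mem_ker]
    funext e
    exact e.2 i hi
  let Ψ : (S ⧸ I) →ₗ[S] V := Submodule.liftQ I Φ hIker
  have hinj : Function.Injective Ψ := by
    rw [injective_iff_map_eq_zero]
    intro a ha
    by_contra hne
    obtain ⟨χ₀, hχ₀⟩ := hcog (Shrink.{w'} (S ⧸ I))
      ((Shrink.linearEquiv S (S ⧸ I)).symm a)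
      (by rw [Ne, LinearEquiv.map_eq_zero_iff]; exact hne)
    set χ : (S ⧸ I) →ₗ[S] E :=
      χ₀ ∘ₗ (Shrink.linearEquiv S (S ⧸ I)).symm.toLinearMap with hχ
    have hχa : χ a ≠ 0 := hχ₀
    obtain ⟨s, rfl⟩ := Submodule.Quotient.mk_surjective I a
    have he : ∀ i ∈ I, i • χ (Submodule.Quotient.mk 1) = 0 := by
      intro i hi
      have : (Submodule.Quotient.mk (i • (1:S)) : S ⧸ I) = 0 := by
        rw [Submodule.Quotient.mk_eq_zero]
        simpa using hi
      rw [← map_smul, ← Submodule.Quotient.mk_smul, this, map_zero]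
    have hΨ : Ψ (Submodule.Quotient.mk s) ⟨χ (Submodule.Quotient.mk 1), he⟩
        = s • χ (Submodule.Quotient.mk 1) := by
      simp only [Ψ, Submodule.liftQ_apply]
      rfl
    have : s • χ (Submodule.Quotient.mk 1) = χ (Submodule.Quotient.mk s) := by
      rw [← map_smul, ← Submodule.Quotient.mk_smul]
      norm_num
    rw [ha] at hΨ
    apply hχa
    rw [← this, ← hΨ]
    rfl
  exact small_of_injective (f := Ψ) hinj

lemma core_ideal [Module.Injective S E]
    (hcog : ∀ (N : Type w') [AddCommGroup N] [Module S N] (z : N), z ≠ 0 →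
      ∃ f : N →ₗ[S] E, f z ≠ 0)
    (I : Ideal S) (hsm : Small.{w'} (S ⧸ I)) (ψ : I →ₗ[S] E) :
    ∃ e0 : E, ∀ i : I, (i : S) • e0 = ψ i := by
  classical
  haveI : Small.{x'} (S ⧸ I) := small_quot_of_cog hcog I
  let ι : I →ₗ[S] S × E := LinearMap.prod I.subtype (-ψ)
  let W : Submodule S (S × E) := LinearMap.range ι
  let P := (S × E) ⧸ W
  let ε : E →ₗ[S] P := W.mkQ ∘ₗ LinearMap.inr S S E
  have hε : Function.Injective ε := by
    rw [injective_iff_map_eq_zero]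
    intro e he
    have h0 : ((0 : S), e) ∈ W := by
      have h1 := he
      rw [show ε e = Submodule.Quotient.mk ((0:S), e) from rfl,
        Submodule.Quotient.mk_eq_zero] at h1
      exact h1
    obtain ⟨i, hi⟩ := LinearMap.mem_range.mp h0
    have hi1 : (i : S) = 0 := congrArg Prod.fst hi
    have hi0 : i = 0 := Subtype.ext hi1
    have := congrArg Prod.snd hi
    simp only [ι, LinearMap.prod_apply, Pi.prod, LinearMap.neg_apply] at this
    rw [hi0] at this
    simpa using this.symm
  have hPsmall : Small.{x'} P := by
    apply small_of_surjective
      (f := fun p : (S ⧸ I) × E =>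
        (Submodule.Quotient.mk ((Quotient.out p.1 : S), p.2) : P))
    intro q
    obtain ⟨⟨s, e⟩, rfl⟩ := Submodule.Quotient.mk_surjective W q
    have hout : (Submodule.Quotient.mk (Quotient.out (Submodule.Quotient.mk s : S ⧸ I)) : S ⧸ I)
        = Submodule.Quotient.mk s := Quotient.out_eq _
    have hmem : (Quotient.out (Submodule.Quotient.mk s : S ⧸ I) : S) - s ∈ I :=
      (Submodule.Quotient.eq I).mp hout
    refine ⟨(Submodule.Quotient.mk s, e - ψ ⟨_, hmem⟩), ?_⟩
    rw [Submodule.Quotient.eq]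
    exact ⟨⟨_, hmem⟩, by simp [ι]⟩
  let eqv : Shrink.{x'} P ≃ₗ[S] P := Shrink.linearEquiv S P
  obtain ⟨h, hh⟩ := Module.Injective.out (eqv.symm.toLinearMap ∘ₗ ε)
    (by exact eqv.symm.injective.comp hε) (LinearMap.id (R := S) (M := E))
  refine ⟨h (eqv.symm (Submodule.Quotient.mk ((1 : S), (0 : E)))), ?_⟩
  intro i
  have key : (Submodule.Quotient.mk ((i : S) • ((1:S), (0:E))) : P) = ε (ψ i) := by
    have : ((i : S) • ((1:S), (0:E))) - ((0 : S), ψ i) = (↑i, -ψ i) := by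
      simp [Prod.ext_iff, smul_eq_mul]
    rw [show (ε (ψ i) : P) = Submodule.Quotient.mk ((0 : S), ψ i) from rfl,
      Submodule.Quotient.eq]
    rw [this]
    exact ⟨i, rfl⟩
  calc (i : S) • h (eqv.symm (Submodule.Quotient.mk ((1 : S), (0 : E))))
      = h (eqv.symm (Submodule.Quotient.mk ((i : S) • ((1:S), (0:E))))) := by
        rw [← map_smul, ← map_smul, ← Submodule.Quotient.mk_smul]
    _ = h (eqv.symm (ε (ψ i))) := by rw [key]
    _ = ψ i := hh (ψ i)

lemma extension_w [Module.Injective S E]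
    (hcog : ∀ (N : Type w') [AddCommGroup N] [Module S N] (z : N), z ≠ 0 →
      ∃ f : N →ₗ[S] E, f z ≠ 0)
    {Y : Type w'} [AddCommGroup Y] [Module S Y] (X : Submodule S Y) (φ : X →ₗ[S] E) :
    ∃ H : Y →ₗ[S] E, ∀ z : X, H z = φ z := by
  classical
  set sSet : Set (Y →ₗ.[S] E) := {p | LinearPMap.mk X φ ≤ p} with hsSet
  obtain ⟨p, hbase, hmax⟩ := zorn_le_nonempty₀ sSet
    (fun c hcs hchain y hy => by
      have hdir : DirectedOn (· ≤ ·) c := IsChain.directedOn hchain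
      refine ⟨LinearPMap.sSup c hdir, ?_, fun z hz => LinearPMap.le_sSup hdir hz⟩
      exact le_trans (hcs hy) (LinearPMap.le_sSup hdir hy))
    (LinearPMap.mk X φ) (show LinearPMap.mk X φ ≤ LinearPMap.mk X φ from le_rfl)
  have hp : LinearPMap.mk X φ ≤ p := hbase
  have htop : p.domain = ⊤ := by
    by_contra hne
    obtain ⟨y, hy⟩ : ∃ y : Y, y ∉ p.domain := by
      by_contra hall
      push_neg at hall
      exact hne (Submodule.eq_top_iff'.mpr hall)
    set D := p.domain with hD
    set ρ : S →ₗ[S] (Y ⧸ D) := D.mkQ ∘ₗ LinearMap.toSpanSingleton S Y y with hρ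
    set I : Ideal S := LinearMap.ker ρ with hI
    have hmemI : ∀ s : S, s ∈ I ↔ s • y ∈ D := by
      intro s
      rw [hI, LinearMap.mem_ker, hρ]
      simp only [LinearMap.coe_comp, Function.comp_apply, LinearMap.toSpanSingleton_apply,
        Submodule.mkQ_apply]
      exact Submodule.Quotient.mk_eq_zero D
    have hsmall : Small.{w'} (S ⧸ I) := by
      have : Function.Injective
          (fun a : S ⧸ I => ((LinearMap.quotKerEquivRange ρ a : Y ⧸ D))) := by
        intro a b hab
        exact (LinearMap.quotKerEquivRange ρ).injective (Subtype.ext hab)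
      exact small_of_injective this
    set toD : I →ₗ[S] D :=
      LinearMap.codRestrict D ((LinearMap.toSpanSingleton S Y y) ∘ₗ I.subtype)
        (fun i => by
          simpa using (hmemI i).mp i.2) with htoD
    set ψ : I →ₗ[S] E := p.toFun ∘ₗ toD with hψ
    obtain ⟨e0, he0⟩ := core_ideal hcog I hsmall ψ
    have he0' : ∀ (s : S) (hs : s • y ∈ D), s • e0 = p ⟨s • y, hs⟩ := by
      intro s hs
      have hsI : s ∈ I := (hmemI s).mpr hs
      have htd : toD ⟨s, hsI⟩ = ⟨s • y, hs⟩ := Subtype.ext rfl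
      have h1 := he0 ⟨s, hsI⟩
      rw [hψ] at h1
      simp only [LinearMap.coe_comp, Function.comp_apply, htd] at h1
      exact h1
    set π : (D × S) →ₗ[S] Y :=
      D.subtype ∘ₗ (LinearMap.fst S D S)
        + (LinearMap.toSpanSingleton S Y y) ∘ₗ (LinearMap.snd S D S) with hπ
    have hπ_apply : ∀ v : D × S, π v = (v.1 : Y) + v.2 • y := fun v => rfl
    set Qt : (D × S) →ₗ[S] E :=
      p.toFun ∘ₗ (LinearMap.fst S D S)
        + (LinearMap.toSpanSingleton S E e0) ∘ₗ (LinearMap.snd S D S) with hQt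
    have hQt_apply : ∀ v : D × S, Qt v = p v.1 + v.2 • e0 := fun v => rfl
    have hker : LinearMap.ker π ≤ LinearMap.ker Qt := by
      rintro ⟨d, s⟩ hv
      have hv' : (d : Y) + s • y = 0 := hv
      have hsy : s • y = -(d : Y) := by
        rw [eq_neg_iff_add_eq_zero, add_comm]; exact hv'
      have hsD : s • y ∈ D := hsy ▸ (neg_mem d.2)
      have hmk : Qt (d, s) = p d + s • e0 := rfl
      have : s • e0 = p ⟨s • y, hsD⟩ := he0' s hsD
      have hz : d + (⟨s • y, hsD⟩ : D) = 0 := by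
        apply Subtype.ext
        simp [hsy]
      rw [LinearMap.mem_ker, hmk, this]
      show p.toFun d + p.toFun ⟨s • y, hsD⟩ = 0
      rw [← map_add, hz, map_zero]
    set q' : (LinearMap.range π) →ₗ[S] E :=
      (Submodule.liftQ (LinearMap.ker π) Qt hker)
        ∘ₗ (LinearMap.quotKerEquivRange π).symm.toLinearMap with hq'
    have hq'_apply : ∀ (v : D × S) (h : π v ∈ LinearMap.range π),
        q' ⟨π v, h⟩ = Qt v := by
      intro v h
      have h1 : (LinearMap.quotKerEquivRange π).symm ⟨π v, h⟩
          = Submodule.Quotient.mk v := by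
        rw [LinearEquiv.symm_apply_eq]
        apply Subtype.ext
        rw [LinearMap.quotKerEquivRange_apply_mk]
      rw [hq']
      simp only [LinearMap.coe_comp, Function.comp_apply, LinearEquiv.coe_coe]
      rw [h1, Submodule.liftQ_apply]
    set p' : Y →ₗ.[S] E := LinearPMap.mk (LinearMap.range π) q' with hp'
    have hDle : D ≤ LinearMap.range π := by
      intro d hd
      exact ⟨(⟨d, hd⟩, 0), by simp [hπ_apply]⟩
    have hple : p ≤ p' := by
      constructor
      · exact hDle
      · intro u v huv
        have hmem : π (u, 0) ∈ LinearMap.range π := ⟨(u, 0), rfl⟩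
        have hv : v = ⟨π (u, 0), hmem⟩ := by
          apply Subtype.ext
          rw [← huv]
          simp [hπ_apply]
        rw [hv]
        show p u = q' _
        rw [hq'_apply (u, 0) hmem, hQt_apply]
        simp
    have hp'mem : p' ∈ sSet := le_trans hp hple
    have hcontr := hmax.2 hp'mem hple
    have hyp' : y ∈ p'.domain := ⟨(0, 1), by simp [hπ_apply]⟩
    exact hy (hcontr.1 hyp')
  refine ⟨p.toFun ∘ₗ (LinearMap.codRestrict p.domain LinearMap.id
    (fun z => by rw [htop]; trivial)), ?_⟩
  intro z
  have := hp.2 (x := z) (y := ⟨(z : Y), hp.1 z.2⟩) rfl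
  simp only [LinearPMap.mk_apply] at this
  exact this.symm

end Aux

/-- let `R` be an algebra over a commutative ring `S`, `E` an
injective cogenerator of `S`-modules, and `M` a right `R`-module.  Then `M` is
`(n,m)`-flat iff the left `R`-module `Hom_S(M, E)` is `(n,m)`-injective. -/
theorem stmt_16 (S : Type u) (R : Type v) (M : Type w) (E : Type x)
    [CommRing S] [Ring R] [Algebra S R]
    [AddCommGroup M] [Module Rᵐᵒᵖ M] [Module S M] [SMulCommClass Rᵐᵒᵖ S M]
    [IsScalarTower S Rᵐᵒᵖ M]
    [AddCommGroup E] [Module S E] [Module.Injective S E]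
    (hcog : ∀ (N : Type w) [AddCommGroup N] [Module S N] (x : N), x ≠ 0 →
      ∃ f : N →ₗ[S] E, f x ≠ 0)
    (n m : ℕ) (hn : 0 < n) (hm : 0 < m) :
    NMFlatRight R M n m ↔ NMInjectiveLeft R (M →ₗ[S] E) n m := by
  classical
  constructor
  · -- flat → injective
    intro hflat K hK f
    obtain ⟨s, hcard, hspan⟩ := hK
    subst hspan
    -- choose generators
    set kk : Fin m → (Fin n → R) := fun j =>
      if h : (j : ℕ) < s.card then ((s.equivFin.symm ⟨j, h⟩ : {a // a ∈ s}) : Fin n → R) else 0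
      with hkk
    have hkk_mem : ∀ j, kk j ∈ Submodule.span R (s : Set (Fin n → R)) := by
      intro j
      by_cases h : (j:ℕ) < s.card
      · simp only [hkk, dif_pos h]
        exact Submodule.subset_span (s.equivFin.symm ⟨j, h⟩).2
      · simp only [hkk, dif_neg h]; exact zero_mem _
    have hkk_surj : ∀ a ∈ s, ∃ j : Fin m, kk j = a := by
      intro a ha
      have hlt : (s.equivFin ⟨a, ha⟩ : ℕ) < s.card := (s.equivFin ⟨a, ha⟩).2
      refine ⟨Fin.castLE hcard (s.equivFin ⟨a, ha⟩), ?_⟩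
      have h : ((Fin.castLE hcard (s.equivFin ⟨a, ha⟩) : Fin m) : ℕ) < s.card := hlt
      simp only [hkk, dif_pos h]
      have heq : (⟨((Fin.castLE hcard (s.equivFin ⟨a, ha⟩) : Fin m) : ℕ), h⟩ : Fin s.card)
          = s.equivFin ⟨a, ha⟩ := by
        apply Fin.ext; simp
      rw [heq, Equiv.symm_apply_apply]
    set F : Fin m → (M →ₗ[S] E) := fun j => f ⟨kk j, hkk_mem j⟩ with hF
    set β : (Fin m → M) →ₗ[S] (Fin n → M) :=
      { toFun := fun v t => ∑ j, op (kk j t) • v j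
        map_add' := by
          intro v w; funext t
          show ∑ j, op (kk j t) • (v j + w j)
            = (∑ j, op (kk j t) • v j) + (∑ j, op (kk j t) • w j)
          rw [← Finset.sum_add_distrib]
          exact Finset.sum_congr rfl fun j _ => smul_add _ _ _
        map_smul' := by
          intro a v; funext t
          show ∑ j, op (kk j t) • (a • v j) = a • ∑ j, op (kk j t) • v j
          rw [Finset.smul_sum]
          exact Finset.sum_congr rfl fun j _ => smul_comm (op (kk j t)) a (v j) }
      with hβ
    have hβ_apply : ∀ v t, β v t = ∑ j, op (kk j t) • v j := fun v t => rfl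
    set ψm : (Fin m → M) →ₗ[S] E :=
      { toFun := fun v => ∑ j, F j (v j)
        map_add' := by
          intro v w
          show ∑ j, F j (v j + w j) = (∑ j, F j (v j)) + ∑ j, F j (w j)
          rw [← Finset.sum_add_distrib]
          exact Finset.sum_congr rfl fun j _ => map_add _ _ _
        map_smul' := by
          intro a v
          show ∑ j, F j (a • v j) = a • ∑ j, F j (v j)
          rw [Finset.smul_sum]
          exact Finset.sum_congr rfl fun j _ => map_smul _ _ _ }
      with hψm
    have hψm_apply : ∀ v, ψm v = ∑ j, F j (v j) := fun v => rfl
    have hker : LinearMap.ker β ≤ LinearMap.ker ψm := by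
      intro v hv
      have hv0 : β v = 0 := hv
      have hv' : ∀ t, ∑ j, op (kk j t) • v j = 0 := by
        intro t
        have := congrFun hv0 t
        simpa [hβ_apply] using this
      obtain ⟨L, z, c, hrel, hrepr⟩ := hflat kk v hv'
      rw [LinearMap.mem_ker]
      show ∑ j, F j (v j) = 0
      calc ∑ j, F j (v j) = ∑ j, ∑ l, F j (op (c l j) • z l) := by
            refine Finset.sum_congr rfl fun j _ => ?_
            rw [hrepr j, map_sum]
        _ = ∑ l, ∑ j, F j (op (c l j) • z l) := Finset.sum_comm
        _ = ∑ l, (∑ j, (c l j) • F j) (z l) := by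
            refine Finset.sum_congr rfl fun l _ => ?_
            rw [LinearMap.sum_apply]
            exact Finset.sum_congr rfl fun j _ => rfl
        _ = 0 := by
            refine Finset.sum_eq_zero fun l _ => ?_
            have hamb : (∑ j, c l j • kk j) = (0 : Fin n → R) := by
              funext t
              rw [Finset.sum_apply]
              have : ∀ j, (c l j • kk j) t = c l j * kk j t := fun j => rfl
              rw [Finset.sum_congr rfl fun j _ => this j]
              exact hrel l t
            have hu : (∑ j, c l j • (⟨kk j, hkk_mem j⟩ :
                Submodule.span R (s : Set (Fin n → R)))) = 0 := by
              apply Subtype.ext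
              push_cast
              exact hamb
            have hFsum : (∑ j, (c l j) • F j) = 0 := by
              calc ∑ j, (c l j) • F j
                  = f (∑ j, c l j • (⟨kk j, hkk_mem j⟩ : _)) := by
                    rw [map_sum]
                    exact Finset.sum_congr rfl fun j _ => (map_smul f _ _).symm
                _ = 0 := by rw [hu, map_zero]
            rw [hFsum]
            rfl
    set Xr : Submodule S (Fin n → M) := LinearMap.range β with hXr
    set ψbar : Xr →ₗ[S] E :=
      (Submodule.liftQ (LinearMap.ker β) ψm hker)
        ∘ₗ (LinearMap.quotKerEquivRange β).symm.toLinearMap with hψbar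
    have hψbar_apply : ∀ (v) (h : β v ∈ Xr), ψbar ⟨β v, h⟩ = ψm v := by
      intro v h
      have h1 : (LinearMap.quotKerEquivRange β).symm ⟨β v, h⟩
          = Submodule.Quotient.mk v := by
        rw [LinearEquiv.symm_apply_eq]
        apply Subtype.ext
        rw [LinearMap.quotKerEquivRange_apply_mk]
      rw [hψbar]
      simp only [LinearMap.coe_comp, Function.comp_apply, LinearEquiv.coe_coe]
      rw [h1, Submodule.liftQ_apply]
    obtain ⟨H, hH⟩ := extension_w hcog Xr ψbar
    have hHβ : ∀ v, H (β v) = ψm v := by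
      intro v
      have := hH ⟨β v, ⟨v, rfl⟩⟩
      rw [this]; exact hψbar_apply _ _
    set g : (Fin n → R) →ₗ[R] (M →ₗ[S] E) :=
      { toFun := fun r =>
          { toFun := fun v => H (fun t => op (r t) • v)
            map_add' := fun v w => by
              show H (fun t => op (r t) • (v + w))
                = H (fun t => op (r t) • v) + H (fun t => op (r t) • w)
              rw [show (fun t => op (r t) • (v + w))
                  = (fun t => op (r t) • v) + (fun t => op (r t) • w)
                from funext fun t => smul_add _ _ _, map_add]
            map_smul' := fun a v => by
              show H (fun t => op (r t) • (a • v)) = _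
              rw [show (fun t => op (r t) • (a • v))
                  = a • (fun t => op (r t) • v)
                from funext fun t => smul_comm _ _ _, map_smul]
              rfl }
        map_add' := fun r r' => by
          apply LinearMap.ext; intro v
          show H (fun t => op ((r t) + (r' t)) • v)
            = H (fun t => op (r t) • v) + H (fun t => op (r' t) • v)
          rw [← map_add]
          congr 1
          funext t
          show op (r t + r' t) • v = op (r t) • v + op (r' t) • v
          rw [op_add, add_smul]
        map_smul' := fun a r => by
          apply LinearMap.ext; intro v
          show H (fun t => op (a * r t) • v) = H (fun t => op (r t) • (op a • v))
          congr 1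
          funext t
          rw [op_mul, mul_smul] } with hg
    have hg_apply : ∀ r v, g r v = H (fun t => op (r t) • v) := fun r v => rfl
    refine ⟨g, ?_⟩
    have main : ∀ a (ha : a ∈ Submodule.span R (s : Set (Fin n → R))),
        g a = f ⟨a, ha⟩ := by
      intro a ha
      induction ha using Submodule.span_induction with
      | mem a has =>
          obtain ⟨j, rfl⟩ := hkk_surj a has
          have hsub : (⟨kk j, Submodule.subset_span has⟩ :
              Submodule.span R (s : Set (Fin n → R))) = ⟨kk j, hkk_mem j⟩ :=
            Subtype.ext rfl
          apply LinearMap.ext; intro v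
          rw [hg_apply]
          have hβs : (fun t => op (kk j t) • v) = β (Pi.single j v) := by
            funext t
            rw [hβ_apply]
            rw [Finset.sum_eq_single j]
            · rw [Pi.single_eq_same]
            · intro b _ hb; rw [Pi.single_eq_of_ne hb, smul_zero]
            · intro hj; exact absurd (Finset.mem_univ j) hj
          rw [hβs, hHβ, hψm_apply]
          rw [Finset.sum_eq_single j]
          · rw [Pi.single_eq_same]
          · intro b _ hb; rw [Pi.single_eq_of_ne hb, map_zero]
          · intro hj; exact absurd (Finset.mem_univ j) hj
      | zero =>
          rw [map_zero]
          have : (⟨0, zero_mem _⟩ : Submodule.span R (s : Set (Fin n → R))) = 0 := rfl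
          rw [this, map_zero]
      | add a b ha hb iha ihb =>
          rw [map_add, iha, ihb, ← map_add]
          rfl
      | smul r a ha iha =>
          rw [map_smul, iha, ← map_smul]
          rfl
    intro z
    exact main z.1 z.2
  · -- injective → flat
    intro hinj k y hy
    set Dgen : Set (Fin m → M) := {v | ∃ (z0 : M) (c : Fin m → R),
      (∀ t, ∑ j, c j * k j t = 0) ∧ v = fun j => op (c j) • z0} with hDgen
    have hextract : ∀ v ∈ Submodule.span S Dgen,
        ∃ (L : ℕ) (z : Fin L → M) (c : Fin L → Fin m → R),
          (∀ l t, ∑ j, c l j * k j t = 0) ∧ ∀ j, v j = ∑ l, op (c l j) • z l := by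
      intro v hv
      induction hv using Submodule.span_induction with
      | mem a has =>
          obtain ⟨z0, c0, hc0, rfl⟩ := has
          exact ⟨1, fun _ => z0, fun _ => c0, fun l t => hc0 t, fun j => by
            rw [Fin.sum_univ_one]⟩
      | zero =>
          exact ⟨0, Fin.elim0, Fin.elim0, fun l => l.elim0, fun j => by
            rw [Finset.univ_eq_empty, Finset.sum_empty]; rfl⟩
      | add a b ha hb iha ihb =>
          obtain ⟨L1, z1, c1, h1, r1⟩ := iha
          obtain ⟨L2, z2, c2, h2, r2⟩ := ihb
          refine ⟨L1 + L2, Fin.append z1 z2, Fin.append c1 c2, ?_, ?_⟩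
          · intro l t
            induction l using Fin.addCases with
            | left l => rw [Fin.append_left]; exact h1 l t
            | right l => rw [Fin.append_right]; exact h2 l t
          · intro j
            rw [Fin.sum_univ_add]
            simp only [Fin.append_left, Fin.append_right]
            show a j + b j = _
            rw [r1 j, r2 j]
      | smul a x hx ihx =>
          obtain ⟨L, z, c, h, r⟩ := ihx
          refine ⟨L, fun l => a • z l, c, h, fun j => ?_⟩
          show a • x j = _
          rw [r j, Finset.smul_sum]
          exact Finset.sum_congr rfl fun l _ => (smul_comm (op (c l j)) a (z l)).symm
    have hyD : y ∈ Submodule.span S Dgen := by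
      by_contra hyD
      have hmkne : (Submodule.Quotient.mk y : (Fin m → M) ⧸ Submodule.span S Dgen) ≠ 0 := by
        rw [Ne, Submodule.Quotient.mk_eq_zero]; exact hyD
      obtain ⟨χ, hχ⟩ := hcog ((Fin m → M) ⧸ Submodule.span S Dgen)
        (Submodule.Quotient.mk y) hmkne
      set G : (Fin m → M) →ₗ[S] E := χ ∘ₗ (Submodule.span S Dgen).mkQ with hG
      have hGy : G y ≠ 0 := hχ
      have hGD : ∀ v ∈ Submodule.span S Dgen, G v = 0 := by
        intro v hv
        show χ ((Submodule.span S Dgen).mkQ v) = 0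
        rw [Submodule.mkQ_apply, (Submodule.Quotient.mk_eq_zero _).mpr hv, map_zero]
      set h' : Fin m → (M →ₗ[S] E) := fun j =>
        { toFun := fun v => G (Pi.single j v)
          map_add' := fun v w => by
            show G (Pi.single j (v + w)) = G (Pi.single j v) + G (Pi.single j w)
            rw [Pi.single_add, map_add]
          map_smul' := fun a v => by
            show G (Pi.single j (a • v)) = a • G (Pi.single j v)
            rw [Pi.single_smul, map_smul] }
        with hh'
      have hh'_apply : ∀ j v, h' j v = G (Pi.single j v) := fun j v => rfl
      set pmap : (Fin m → R) →ₗ[R] (Fin n → R) :=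
        { toFun := fun r => ∑ j, r j • k j
          map_add' := fun r r' => by
            show ∑ j, (r j + r' j) • k j = (∑ j, r j • k j) + ∑ j, r' j • k j
            rw [← Finset.sum_add_distrib]
            exact Finset.sum_congr rfl fun j _ => add_smul _ _ _
          map_smul' := fun a r => by
            show ∑ j, (a * r j) • k j = a • ∑ j, r j • k j
            rw [Finset.smul_sum]
            exact Finset.sum_congr rfl fun j _ => mul_smul _ _ _ } with hpmap
      have hpmap_apply : ∀ r, pmap r = ∑ j, r j • k j := fun r => rfl
      have hps : ∀ j, pmap (Pi.single j 1) = k j := by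
        intro j
        rw [hpmap_apply, Finset.sum_eq_single j]
        · rw [Pi.single_eq_same, one_smul]
        · intro b _ hb; rw [Pi.single_eq_of_ne hb, zero_smul]
        · intro hj; exact absurd (Finset.mem_univ j) hj
      have hcoe : ((Finset.image k Finset.univ : Finset (Fin n → R)) : Set (Fin n → R))
          = Set.range k := by
        rw [Finset.coe_image, Finset.coe_univ, Set.image_univ]
      have hspan' : Submodule.span R
          ((Finset.image k Finset.univ : Finset (Fin n → R)) : Set (Fin n → R))
          = LinearMap.range pmap := by
        rw [hcoe]
        apply le_antisymm
        · rw [Submodule.span_le]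
          rintro a ⟨j, rfl⟩
          exact ⟨Pi.single j 1, hps j⟩
        · rintro a ⟨r, rfl⟩
          rw [hpmap_apply]
          exact Submodule.sum_mem _ fun j _ =>
            Submodule.smul_mem _ _ (Submodule.subset_span ⟨j, rfl⟩)
      have hcard' : (Finset.image k Finset.univ).card ≤ m :=
        le_trans Finset.card_image_le (by simp)
      set qmap : (Fin m → R) →ₗ[R] (M →ₗ[S] E) :=
        { toFun := fun r => ∑ j, r j • h' j
          map_add' := fun r r' => by
            show ∑ j, (r j + r' j) • h' j = (∑ j, r j • h' j) + ∑ j, r' j • h' j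
            rw [← Finset.sum_add_distrib]
            exact Finset.sum_congr rfl fun j _ => add_smul _ _ _
          map_smul' := fun a r => by
            show ∑ j, (a * r j) • h' j = a • ∑ j, r j • h' j
            rw [Finset.smul_sum]
            exact Finset.sum_congr rfl fun j _ => mul_smul _ _ _ } with hqmap
      have hqmap_apply : ∀ r, qmap r = ∑ j, r j • h' j := fun r => rfl
      have hkerpq : LinearMap.ker pmap ≤ LinearMap.ker qmap := by
        intro r hr
        rw [LinearMap.mem_ker] at hr ⊢
        apply LinearMap.ext; intro v
        rw [hqmap_apply]
        show (∑ j, r j • h' j) v = 0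
        rw [LinearMap.sum_apply]
        have hterm : ∀ j, (r j • h' j) v = G (Pi.single j (op (r j) • v)) :=
          fun j => rfl
        rw [Finset.sum_congr rfl fun j _ => hterm j, ← map_sum,
          Finset.univ_sum_single (fun j => op (r j) • v)]
        apply hGD
        apply Submodule.subset_span
        refine ⟨v, r, ?_, rfl⟩
        intro t
        have := congrFun (show pmap r = 0 from hr) t
        rw [hpmap_apply] at this
        rw [Finset.sum_apply] at this
        simpa using this
      set fK : (LinearMap.range pmap) →ₗ[R] (M →ₗ[S] E) :=
        (Submodule.liftQ (LinearMap.ker pmap) qmap hkerpq)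
          ∘ₗ (LinearMap.quotKerEquivRange pmap).symm.toLinearMap with hfK
      have hfK_apply : ∀ (r) (h : pmap r ∈ LinearMap.range pmap),
          fK ⟨pmap r, h⟩ = qmap r := by
        intro r h
        have h1 : (LinearMap.quotKerEquivRange pmap).symm ⟨pmap r, h⟩
            = Submodule.Quotient.mk r := by
          rw [LinearEquiv.symm_apply_eq]
          apply Subtype.ext
          rw [LinearMap.quotKerEquivRange_apply_mk]
        rw [hfK]
        simp only [LinearMap.coe_comp, Function.comp_apply, LinearEquiv.coe_coe]
        rw [h1, Submodule.liftQ_apply]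
      obtain ⟨g, hg⟩ := hinj (LinearMap.range pmap)
        ⟨Finset.image k Finset.univ, hcard', hspan'⟩ fK
      have hgk : ∀ j, g (k j) = h' j := by
        intro j
        have hmem : k j ∈ LinearMap.range pmap := ⟨Pi.single j 1, hps j⟩
        have h2 : (⟨k j, hmem⟩ : LinearMap.range pmap)
            = ⟨pmap (Pi.single j 1), ⟨Pi.single j 1, rfl⟩⟩ :=
          Subtype.ext (hps j).symm
        have := hg ⟨k j, hmem⟩
        rw [h2] at this
        rw [show (g (k j) : M →ₗ[S] E) = g (pmap (Pi.single j 1)) by rw [hps j]]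
        rw [this]; refine (hfK_apply _ _).trans ?_; rw [hqmap_apply, Finset.sum_eq_single j]
        · rw [Pi.single_eq_same, one_smul]
        · intro b _ hb; rw [Pi.single_eq_of_ne hb, zero_smul]
        · intro hj; exact absurd (Finset.mem_univ j) hj
      have hgr : ∀ j, h' j = ∑ t, (k j t) • g ((Pi.single t (1:R) : Fin n → R)) := by
        intro j
        rw [← hgk j]
        have hkj : k j = ∑ t, (k j t) • (Pi.single t (1:R) : Fin n → R) := by
          funext u
          rw [Finset.sum_apply, Finset.sum_eq_single u]
          · rw [Pi.smul_apply, Pi.single_eq_same, smul_eq_mul, mul_one]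
          · intro b _ hb
            rw [Pi.smul_apply, Pi.single_eq_of_ne (Ne.symm hb), smul_zero]
          · intro hu; exact absurd (Finset.mem_univ u) hu
        conv_lhs => rw [hkj]
        rw [map_sum]
        exact Finset.sum_congr rfl fun t _ => by rw [map_smul]
      have hcontra : G y = 0 := by
        calc G y = ∑ j, h' j (y j) := by
              conv_lhs => rw [← Finset.univ_sum_single y]
              rw [map_sum]
              exact Finset.sum_congr rfl fun j _ => rfl
          _ = ∑ j, ∑ t, (g ((Pi.single t (1:R) : Fin n → R))) (op (k j t) • y j) := by
              refine Finset.sum_congr rfl fun j _ => ?_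
              rw [hgr j, LinearMap.sum_apply]
              exact Finset.sum_congr rfl fun t _ => rfl
          _ = ∑ t, (g ((Pi.single t (1:R) : Fin n → R))) (∑ j, op (k j t) • y j) := by
              rw [Finset.sum_comm]
              exact Finset.sum_congr rfl fun t _ => (map_sum _ _ _).symm
          _ = 0 := by
              refine Finset.sum_eq_zero fun t _ => ?_
              rw [hy t, map_zero]
      exact hGy hcontra
    exact hextract y hyD
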